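/- arXiv:0811.3056 — 3 statements merged into one kernel-verified Lean document; each statement's English description precedes it below -/
import Mathlib

section
/- (Lemma 3.1, with normalization made precise) Let Re s > 3/2, x ∈ ℂ, z ∈ ℂ∖Γ and y ∈ ℝ. Then R(s, x, z, y) = (πα Γ(s) χ(z, x))^{−1} · ∫_{−∞}^{∞} I(s, z, x, k/(πα)) e^{−2πiky} dk, where Γ is Euler's Gamma function and the integral over k converges absolutely. -/
noncomputable section

/-- The lattice Γ = ℤ + τℤ, as a map ℤ × ℤ → ℂ. -/
def lat (τ : ℂ) (p : ℤ × ℤ) : ℂ := (p.1 : ℂ) + (p.2 : ℂ) * τ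

/-- α = Im τ / π. -/
def alf (τ : ℂ) : ℝ := τ.im / Real.pi

/-- The character χ(γ, x) = exp(α⁻¹(γ·conj x − conj γ·x)). -/
def chi (τ γ x : ℂ) : ℂ :=
  Complex.exp (((alf τ)⁻¹ : ℝ) * (γ * (starRingEnd ℂ) x - (starRingEnd ℂ) γ * x))

/-- The series R(s, x, z, y) = Σ_{γ∈Γ} χ(γ, x)((παy)² + |z + γ|²)^{−s}. -/
def Rser (τ s x z : ℂ) (y : ℝ) : ℂ :=
  ∑' p : ℤ × ℤ, chi τ (lat τ p) x *
    (((Real.pi * alf τ * y) ^ 2 + ‖z + lat τ p‖ ^ 2 : ℝ) : ℂ) ^ (-s)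

/-- The heat-kernel series
I(s, x, z, y) = √π Σ_{γ∈Γ} χ(γ+x, z) ∫₀^∞ t^{s−3/2} exp(−π²y²/t − t|γ+x|²) dt. -/
def Iser (τ s x z : ℂ) (y : ℝ) : ℂ :=
  (Real.sqrt Real.pi : ℂ) * ∑' p : ℤ × ℤ, chi τ (lat τ p + x) z *
    ∫ t in Set.Ioi (0 : ℝ), (t : ℂ) ^ (s - 3 / 2) *
      (Real.exp (-(Real.pi ^ 2 * y ^ 2) / t - t * ‖lat τ p + x‖ ^ 2) : ℂ)


open MeasureTheory Set Complex Filter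
open scoped Real ENNReal NNReal


lemma intOn_cpow_exp {a : ℂ} (ha : 0 < a.re) {r : ℝ} (hr : 0 < r) :
    IntegrableOn (fun t : ℝ => (t : ℂ) ^ (a - 1) * (Real.exp (-(r * t)) : ℂ)) (Ioi 0) := by
  have := Complex.GammaIntegral_convergent ha
  rw [← mul_zero r, ← integrableOn_Ioi_comp_mul_left_iff _ _ hr] at this
  refine IntegrableOn.congr_fun (this.const_mul ((1:ℂ) / (r:ℂ) ^ (a - 1)))
    (fun t (ht : 0 < t) => ?_) measurableSet_Ioi
  have hrt : ((r * t : ℝ) : ℂ) ^ (a - 1) = (r:ℂ) ^ (a-1) * (t:ℂ) ^ (a-1) := by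
    push_cast
    rw [mul_cpow_ofReal_nonneg hr.le ht.le]
  have hr0 : ((r:ℂ)) ^ (a-1) ≠ 0 := by
    simp only [ne_eq, Complex.cpow_eq_zero_iff, Complex.ofReal_eq_zero, not_and_or]
    exact Or.inl hr.ne'
  rw [hrt]
  field_simp

lemma intOn_rpow_exp {a : ℝ} (ha : 0 < a) {r : ℝ} (hr : 0 < r) :
    IntegrableOn (fun t : ℝ => t ^ (a - 1) * Real.exp (-(r * t))) (Ioi 0) := by
  have h : IntegrableOn (fun t : ℝ => ‖(t : ℂ) ^ ((a:ℂ) - 1) * (Real.exp (-(r * t)) : ℂ)‖)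
      (Ioi 0) := (intOn_cpow_exp (a := (a : ℂ)) (by simpa using ha) hr).norm
  refine h.congr_fun (fun t (ht : 0 < t) => ?_) measurableSet_Ioi
  beta_reduce
  rw [norm_mul, Complex.norm_real, Real.norm_of_nonneg (Real.exp_nonneg _),
    Complex.norm_cpow_eq_rpow_re_of_pos ht]
  norm_num

def Jfun (s : ℂ) (α A : ℝ) (k : ℝ) : ℂ :=
  ∫ t in Ioi (0:ℝ), (t : ℂ) ^ (s - 3/2) * (Real.exp (-(k^2/α^2)/t - t*A) : ℂ)

section Key
variable {s : ℂ} {α A : ℝ} (y : ℝ)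

lemma Jfun_norm_le (hs : 3/2 < s.re) (hα : 0 < α) (hA : 0 < A) (k : ℝ) :
    ‖Jfun s α A k‖ ≤ Real.Gamma (s.re - 1/2) * A ^ (-(s.re - 1/2)) := by
  have h1 : ‖Jfun s α A k‖ ≤ ∫ t in Ioi (0:ℝ), t ^ ((s.re - 1/2) - 1) * Real.exp (-(A*t)) := by
    apply norm_integral_le_of_norm_le (intOn_rpow_exp (by linarith) hA)
    filter_upwards [ae_restrict_mem measurableSet_Ioi] with t ht
    rw [norm_mul, Complex.norm_real, Real.norm_of_nonneg (Real.exp_nonneg _),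
      Complex.norm_cpow_eq_rpow_re_of_pos ht]
    have h3 : (s - 3/2).re = s.re - 3/2 := by
      simp [Complex.sub_re]
    rw [h3]
    have h2 : s.re - 1/2 - 1 = s.re - 3/2 := by ring
    rw [h2]
    apply mul_le_mul_of_nonneg_left ?_ (Real.rpow_nonneg (le_of_lt ht) _)
    apply Real.exp_le_exp.mpr
    have hpos : 0 ≤ (k^2/α^2)/t := by
      have ht' : (0:ℝ) < t := ht
      positivity
    have hAt : t * A = A * t := mul_comm _ _
    have hneg : -(k^2/α^2)/t = -((k^2/α^2)/t) := by ring
    linarith [hneg]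
  rw [Real.integral_rpow_mul_exp_neg_mul_Ioi (by linarith) hA] at h1
  calc ‖Jfun s α A k‖ ≤ (1/A)^(s.re-1/2) * Real.Gamma (s.re-1/2) := h1
    _ = Real.Gamma (s.re-1/2) * A^(-(s.re-1/2)) := by
        rw [one_div, Real.inv_rpow hA.le, ← Real.rpow_neg hA.le]
        ring

lemma key (hs : 3/2 < s.re) (hα : 0 < α) (hA : 0 < A) :
    Integrable (fun k : ℝ => Jfun s α A k *
        Complex.exp (-2*Real.pi*Complex.I*k*y)) volume ∧
    (∫ k : ℝ, Jfun s α A k * Complex.exp (-2*Real.pi*Complex.I*k*y)) =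
      ((α * Real.sqrt Real.pi : ℝ) : ℂ) * Complex.Gamma s *
        ((((Real.pi*α*y)^2 + A : ℝ)) : ℂ) ^ (-s) ∧
    (∫ k : ℝ, ‖Jfun s α A k * Complex.exp (-2*Real.pi*Complex.I*k*y)‖) ≤
      α * Real.sqrt Real.pi * Real.Gamma s.re * A ^ (-s.re) := by
  have hπ := Real.pi_pos
  have hs0 : 0 < s.re := by linarith
  have hσ1 : (0:ℝ) < s.re := hs0
  set σ := s.re with hσdef
  set μ : Measure ℝ := volume.restrict (Ioi (0:ℝ)) with hμ
  set g : ℝ × ℝ → ℂ := fun q =>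
    (q.1 : ℂ) ^ (s - 3/2) * (Real.exp (-(q.2^2/α^2)/q.1 - q.1*A) : ℂ) *
      Complex.exp (-2*Real.pi*Complex.I*q.2*y) with hg
  -- measurability
  have hmeas : AEStronglyMeasurable g (μ.prod volume) := by
    have hrw : μ.prod volume = (volume.prod volume).restrict ((Ioi (0:ℝ)) ×ˢ (univ : Set ℝ)) := by
      rw [hμ, ← Measure.prod_restrict, Measure.restrict_univ]
    rw [hrw]
    apply ContinuousOn.aestronglyMeasurable ?_ (measurableSet_Ioi.prod MeasurableSet.univ)
    apply ContinuousOn.mul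
    apply ContinuousOn.mul
    · intro q hq
      apply ContinuousAt.continuousWithinAt
      apply ContinuousAt.cpow ?_ continuousAt_const ?_
      · exact Complex.continuous_ofReal.continuousAt.comp continuousAt_fst
      · exact Complex.ofReal_mem_slitPlane.mpr hq.1
    · apply Complex.continuous_ofReal.comp_continuousOn
      apply Real.continuous_exp.comp_continuousOn
      apply ContinuousOn.sub
      · exact ContinuousOn.div ((continuous_snd.pow 2).div_const _).neg.continuousOn
          continuous_fst.continuousOn (fun q hq => ne_of_gt hq.1)
      · exact (continuous_fst.mul continuous_const).continuousOn
    · apply Continuous.continuousOn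
      exact Complex.continuous_exp.comp
        ((continuous_const.mul (Complex.continuous_ofReal.comp continuous_snd)).mul
          continuous_const)
  -- quadratic form of g in k for fixed t
  have hquad : ∀ t : ℝ, 0 < t → (fun k : ℝ => g (t, k)) = (fun k : ℝ =>
      (t : ℂ) ^ (s - 3/2) *
        Complex.exp (-(((1/(α^2*t):ℝ)):ℂ)*(k:ℂ)^2 +
          (((-2*Real.pi*y:ℝ)):ℂ)*Complex.I*(k:ℂ) + ((-(t*A):ℝ):ℂ))) := by
    intro t ht
    funext k
    rw [hg]
    simp only []
    rw [mul_assoc, Complex.ofReal_exp, ← Complex.exp_add]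
    congr 2
    push_cast
    have htc : (t:ℂ) ≠ 0 := Complex.ofReal_ne_zero.mpr ht.ne'
    field_simp
    ring
  -- norm of g
  have hgnorm : ∀ t : ℝ, 0 < t → ∀ k : ℝ,
      ‖g (t, k)‖ = t ^ (σ - 3/2) * Real.exp (-(k^2/α^2)/t - t*A) := by
    intro t ht k
    rw [hg]
    simp only [norm_mul]
    rw [Complex.norm_cpow_eq_rpow_re_of_pos ht, Complex.norm_real,
      Real.norm_of_nonneg (Real.exp_nonneg _), Complex.norm_exp]
    have h1 : (s - 3/2).re = σ - 3/2 := by simp [Complex.sub_re, hσdef]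
    have h2 : (-2*(Real.pi:ℂ)*Complex.I*(k:ℂ)*(y:ℂ)).re = 0 := by simp
    rw [h1, h2, Real.exp_zero, mul_one]
  -- integral of norm over k for fixed t
  have hnormint : ∀ t : ℝ, 0 < t →
      (∫ k : ℝ, ‖g (t, k)‖) =
        α * Real.sqrt Real.pi * (t ^ (σ - 1) * Real.exp (-(A*t))) := by
    intro t ht
    have hsplit : ∀ k : ℝ, ‖g (t, k)‖ =
        (t ^ (σ - 3/2) * Real.exp (-(A*t))) * Real.exp (-(1/(α^2*t)) * k^2) := by
      intro k
      rw [hgnorm t ht k, mul_assoc, ← Real.exp_add]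
      congr 2
      field_simp
      ring
    simp only [hsplit]
    rw [MeasureTheory.integral_const_mul, integral_gaussian]
    have h1 : Real.pi / (1/(α^2*t)) = Real.pi * (α^2*t) := by field_simp
    rw [h1]
    have h2 : Real.sqrt (Real.pi * (α^2*t)) = Real.sqrt Real.pi * (α * Real.sqrt t) := by
      rw [Real.sqrt_mul Real.pi_pos.le, Real.sqrt_mul (sq_nonneg α), Real.sqrt_sq hα.le]
    rw [h2]
    have h3 : t ^ (σ - 3/2) * Real.sqrt t = t ^ (σ - 1) := by
      rw [Real.sqrt_eq_rpow, ← Real.rpow_add ht]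
      congr 1
      ring
    calc t ^ (σ - 3/2) * Real.exp (-(A*t)) * (Real.sqrt Real.pi * (α * Real.sqrt t))
        = (t ^ (σ - 3/2) * Real.sqrt t) * Real.exp (-(A*t)) * (Real.sqrt Real.pi * α) := by ring
      _ = α * Real.sqrt Real.pi * (t ^ (σ - 1) * Real.exp (-(A*t))) := by rw [h3]; ring
  -- integrability of g on the product
  have hInt : Integrable g (μ.prod volume) := by
    rw [MeasureTheory.integrable_prod_iff hmeas]
    constructor
    · filter_upwards [ae_restrict_mem measurableSet_Ioi] with t ht
      rw [hquad t ht]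
      apply Integrable.const_mul
      apply integrable_cexp_quadratic
      simp only [Complex.ofReal_re]
      exact div_pos one_pos (mul_pos (pow_pos hα 2) ht)
    · have hae : (fun t : ℝ => (α * Real.sqrt Real.pi) * (t ^ (σ-1) * Real.exp (-(A*t))))
          =ᵐ[μ] (fun t => ∫ k : ℝ, ‖g (t, k)‖) := by
        filter_upwards [ae_restrict_mem measurableSet_Ioi] with t ht
        rw [hnormint t ht]
      exact Integrable.congr ((intOn_rpow_exp hσ1 hA).const_mul (α * Real.sqrt Real.pi)) hae
  -- identify J with the inner integral
  have hJg : ∀ k : ℝ, (∫ t : ℝ, g (t, k) ∂μ) =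
      Jfun s α A k * Complex.exp (-2*Real.pi*Complex.I*(k:ℂ)*(y:ℂ)) := by
    intro k
    rw [Jfun, ← MeasureTheory.integral_mul_const]
  have hK1 : Integrable (fun k : ℝ => Jfun s α A k *
      Complex.exp (-2*Real.pi*Complex.I*k*y)) volume := by
    have h1 := hInt.integral_prod_right
    exact h1.congr (Eventually.of_forall fun k => hJg k)
  -- Fourier/Gaussian evaluation of the inner k-integral for fixed t
  set R : ℝ := (Real.pi*α*y)^2 + A with hR
  have hRpos : 0 < R := by positivity
  have hin : ∀ t : ℝ, 0 < t → (∫ k : ℝ, g (t, k)) =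
      ((α * Real.sqrt Real.pi : ℝ) : ℂ) * ((t:ℂ)^(s-1) * (Real.exp (-(R * t)) : ℂ)) := by
    intro t ht
    have hbpos : (0:ℝ) < 1/(α^2*t) := by positivity
    set b : ℂ := ((1/(α^2*t) : ℝ) : ℂ) with hbdef
    have hbre : 0 < b.re := by
      rw [hbdef, Complex.ofReal_re]
      exact hbpos
    have hsplit : ∀ k : ℝ, g (t,k) =
        ((t:ℂ)^(s-3/2) * ((Real.exp (-(t*A)) : ℝ):ℂ)) *
          (Complex.exp (Complex.I * ((-2*Real.pi*y:ℝ):ℂ) * (k:ℂ)) *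
            Complex.exp (-b * (k:ℂ)^2)) := by
      intro k
      simp only [hg, Complex.ofReal_exp, ← Complex.exp_add, mul_assoc]
      congr 2
      rw [hbdef]
      push_cast
      have htc : (t:ℂ) ≠ 0 := Complex.ofReal_ne_zero.mpr ht.ne'
      field_simp
      ring
    simp only [hsplit]
    rw [MeasureTheory.integral_const_mul,
      fourierIntegral_gaussian hbre (((-2*Real.pi*y:ℝ)):ℂ)]
    have h1 : (Real.pi : ℂ)/b = ((Real.pi * (α^2*t) : ℝ):ℂ) := by
      rw [hbdef]
      push_cast
      field_simp
    have hnn : (0:ℝ) ≤ Real.pi * (α^2*t) := by positivity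
    have h2 : ((Real.pi * (α^2*t) : ℝ):ℂ) ^ ((1:ℂ)/2) =
        ((Real.sqrt (Real.pi * (α^2*t)) : ℝ) : ℂ) := by
      rw [Real.sqrt_eq_rpow, Complex.ofReal_cpow hnn]
      norm_num
    have h3 : -((((-2*Real.pi*y:ℝ)):ℂ))^2/(4*b) = ((-((Real.pi*α*y)^2*t) : ℝ) : ℂ) := by
      rw [hbdef]
      push_cast
      field_simp
      ring
    rw [h1, h2, h3]
    have h4 : Real.sqrt (Real.pi * (α^2*t)) = Real.sqrt Real.pi * (α * Real.sqrt t) := by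
      rw [Real.sqrt_mul Real.pi_pos.le, Real.sqrt_mul (sq_nonneg α), Real.sqrt_sq hα.le]
    rw [h4]
    rw [show ((Real.sqrt Real.pi * (α * Real.sqrt t) : ℝ) : ℂ) =
        ((α * Real.sqrt Real.pi : ℝ):ℂ) * ((Real.sqrt t : ℝ):ℂ) from by push_cast; ring]
    have h5 : ((Real.sqrt t : ℝ) : ℂ) = (t:ℂ)^((1:ℂ)/2) := by
      rw [Real.sqrt_eq_rpow, Complex.ofReal_cpow ht.le]
      norm_num
    have h6 : (t:ℂ)^(s-1) = (t:ℂ)^(s-3/2) * (t:ℂ)^((1:ℂ)/2) := by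
      rw [← Complex.cpow_add _ _ (Complex.ofReal_ne_zero.mpr ht.ne')]
      congr 1
      ring
    have h7 : Complex.exp (((-((Real.pi*α*y)^2*t) : ℝ)) : ℂ) =
        ((Real.exp (-((Real.pi*α*y)^2*t)) : ℝ) : ℂ) := (Complex.ofReal_exp _).symm
    have h8 : ((Real.exp (-(R*t)) : ℝ) : ℂ) =
        ((Real.exp (-(t*A)) : ℝ):ℂ) * ((Real.exp (-((Real.pi*α*y)^2*t)) : ℝ):ℂ) := by
      rw [← Complex.ofReal_mul, ← Real.exp_add, hR]
      congr 2
      ring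
    rw [h5, h7, h6, h8]
    ring
  -- swap the order of integration
  have hswap : (∫ k : ℝ, (∫ t : ℝ, g (t, k) ∂μ)) = ∫ t : ℝ, (∫ k : ℝ, g (t, k)) ∂μ :=
    (MeasureTheory.integral_integral_swap (f := fun t k => g (t, k)) hInt).symm
  have hK2 : (∫ k : ℝ, Jfun s α A k * Complex.exp (-2*Real.pi*Complex.I*k*y)) =
      ((α * Real.sqrt Real.pi : ℝ) : ℂ) * Complex.Gamma s * ((R : ℝ) : ℂ) ^ (-s) := by
    have h1 : (∫ k : ℝ, Jfun s α A k * Complex.exp (-2*Real.pi*Complex.I*k*y))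
        = ∫ k : ℝ, (∫ t : ℝ, g (t, k) ∂μ) :=
      integral_congr_ae (Eventually.of_forall fun k => (hJg k).symm)
    rw [h1, hswap]
    rw [show (∫ t : ℝ, (∫ k : ℝ, g (t, k)) ∂μ) = ∫ t in Ioi (0:ℝ),
        ((α * Real.sqrt Real.pi : ℝ) : ℂ) * ((t:ℂ)^(s-1) * (Real.exp (-(R * t)) : ℂ)) from
      setIntegral_congr_fun measurableSet_Ioi (fun t ht => hin t ht)]
    rw [MeasureTheory.integral_const_mul]
    have hconv : (∫ t in Ioi (0:ℝ), (t:ℂ)^(s-1) * ((Real.exp (-(R * t)) : ℝ) : ℂ))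
        = (1/(R:ℂ))^s * Complex.Gamma s := by
      rw [← Complex.integral_cpow_mul_exp_neg_mul_Ioi hs0 hRpos]
      refine setIntegral_congr_fun measurableSet_Ioi (fun t ht => ?_)
      rw [Complex.ofReal_exp]
      push_cast
      ring_nf
    rw [hconv]
    have harg : ((R:ℝ):ℂ).arg ≠ Real.pi := by
      rw [Complex.arg_ofReal_of_nonneg hRpos.le]
      exact Real.pi_ne_zero.symm
    rw [one_div, Complex.inv_cpow _ _ harg, ← Complex.cpow_neg]
    ring
  -- norm bound
  have hK3 : (∫ k : ℝ, ‖Jfun s α A k * Complex.exp (-2*Real.pi*Complex.I*k*y)‖) ≤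
      α * Real.sqrt Real.pi * Real.Gamma σ * A ^ (-σ) := by
    have hle : (∫ k : ℝ, ‖Jfun s α A k * Complex.exp (-2*Real.pi*Complex.I*k*y)‖) ≤
        ∫ k : ℝ, (∫ t : ℝ, ‖g (t, k)‖ ∂μ) := by
      apply integral_mono hK1.norm hInt.swap.integral_norm_prod_left
      intro k
      show ‖Jfun s α A k * Complex.exp (-2*Real.pi*Complex.I*k*y)‖ ≤ ∫ t : ℝ, ‖g (t, k)‖ ∂μ
      rw [← hJg k]
      exact norm_integral_le_integral_norm _
    have hswapn : (∫ k : ℝ, (∫ t : ℝ, ‖g (t, k)‖ ∂μ)) = ∫ t : ℝ, (∫ k : ℝ, ‖g (t, k)‖) ∂μ :=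
      (MeasureTheory.integral_integral_swap (f := fun t k => ‖g (t, k)‖) hInt.norm).symm
    rw [hswapn] at hle
    rw [show (∫ t : ℝ, (∫ k : ℝ, ‖g (t, k)‖) ∂μ) = ∫ t in Ioi (0:ℝ),
        α * Real.sqrt Real.pi * (t ^ (σ - 1) * Real.exp (-(A*t))) from
      setIntegral_congr_fun measurableSet_Ioi (fun t ht => hnormint t ht)] at hle
    rw [MeasureTheory.integral_const_mul, Real.integral_rpow_mul_exp_neg_mul_Ioi hσ1 hA] at hle
    calc (∫ k : ℝ, ‖Jfun s α A k * Complex.exp (-2*Real.pi*Complex.I*k*y)‖)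
        ≤ α * Real.sqrt Real.pi * ((1/A)^σ * Real.Gamma σ) := hle
      _ = α * Real.sqrt Real.pi * Real.Gamma σ * A ^ (-σ) := by
          rw [one_div, Real.inv_rpow hA.le, ← Real.rpow_neg hA.le]
          ring
  exact ⟨hK1, hK2, hK3⟩

end Key

lemma integrable_tsum' {ι : Type*} [Countable ι] {F : ι → ℝ → ℂ}
    (hF : ∀ i, Integrable (F i) volume)
    (hptw : ∀ x : ℝ, Summable fun i => ‖F i x‖)
    (hsum : Summable fun i => ∫ x, ‖F i x‖) :
    Integrable (fun x => ∑' i, F i x) volume := by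
  constructor
  · refine aestronglyMeasurable_of_tendsto_ae (u := (atTop : Filter (Finset ι)))
      (f := fun s x => ∑ i ∈ s, F i x) (fun s => ?_) ?_
    · exact Finset.aestronglyMeasurable_fun_sum s (fun i _ => (hF i).1)
    · filter_upwards with x
      exact ((hptw x).of_norm).hasSum
  · have hnn : ∀ x : ℝ, Summable fun i => ‖F i x‖₊ := fun x =>
      NNReal.summable_coe.mp (by simpa using hptw x)
    show (∫⁻ x, (‖∑' i, F i x‖₊ : ℝ≥0∞) ∂volume) < ⊤
    calc (∫⁻ x, (‖∑' i, F i x‖₊ : ℝ≥0∞) ∂volume)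
        ≤ ∫⁻ x, (∑' i, (‖F i x‖₊ : ℝ≥0∞)) ∂volume := by
          refine lintegral_mono fun x => ?_
          rw [← ENNReal.coe_tsum (hnn x)]
          exact ENNReal.coe_le_coe.mpr (nnnorm_tsum_le (hnn x))
      _ = ∑' i, ∫⁻ x, (‖F i x‖₊ : ℝ≥0∞) ∂volume :=
          lintegral_tsum (fun i => (hF i).1.nnnorm.aemeasurable.coe_nnreal_ennreal)
      _ = ∑' i, ENNReal.ofReal (∫ x, ‖F i x‖) := by
          refine tsum_congr fun i => ?_
          exact (ofReal_integral_norm_eq_lintegral_enorm (hF i)).symm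
      _ = ENNReal.ofReal (∑' i, ∫ x, ‖F i x‖) := by
          rw [ENNReal.ofReal_tsum_of_nonneg (fun i => integral_nonneg fun x => norm_nonneg _) hsum]
      _ < ⊤ := ENNReal.ofReal_lt_top



lemma lat_summable (τ : ℂ) (hτ : 0 < τ.im) (z : ℂ) {σ : ℝ} (hσ : 2 < σ) :
    Summable fun p : ℤ × ℤ => ‖lat τ p + z‖ ^ (-σ) := by
  set ζ : UpperHalfPlane := ⟨τ, hτ⟩ with hζ
  set r0 : ℝ := EisensteinSeries.r ζ with hr0
  have hr0pos : 0 < r0 := EisensteinSeries.r_pos ζ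
  set e : (ℤ × ℤ) ≃ (Fin 2 → ℤ) := (Equiv.prodComm ℤ ℤ).trans (finTwoArrowEquiv ℤ).symm with he
  have he0 : ∀ p : ℤ × ℤ, e p 0 = p.2 := by intro p; simp [he, finTwoArrowEquiv]
  have he1 : ∀ p : ℤ × ℤ, e p 1 = p.1 := by intro p; simp [he, finTwoArrowEquiv]
  have hsum1 : Summable fun p : ℤ × ℤ => (r0 / 2) ^ (-σ) * ‖e p‖ ^ (-σ) := by
    apply Summable.mul_left
    exact e.summable_iff.mpr (EisensteinSeries.summable_one_div_norm_rpow hσ)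
  set T : ℝ := max 1 (2 * (‖z‖ + 1) / r0) with hT
  -- the bad set is finite
  have hfin : {p : ℤ × ℤ | ¬ (T ≤ ‖e p‖)}.Finite := by
    set n : ℕ := ⌈T⌉₊ with hn
    apply Set.Finite.subset (Set.finite_Icc ((-(n:ℤ), -(n:ℤ)) : ℤ × ℤ) ((n:ℤ), (n:ℤ)))
    intro p hp
    simp only [Set.mem_setOf_eq, not_le] at hp
    rw [EisensteinSeries.norm_eq_max_natAbs] at hp
    have h0 : ((e p 0).natAbs : ℝ) < T := lt_of_le_of_lt (by
      exact_mod_cast le_max_left _ _) hp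
    have h1 : ((e p 1).natAbs : ℝ) < T := lt_of_le_of_lt (by
      exact_mod_cast le_max_right _ _) hp
    have hTn : T ≤ (n : ℝ) := Nat.le_ceil T
    have h0' : (p.2.natAbs : ℝ) < n := by rw [← he0 p]; linarith
    have h1' : (p.1.natAbs : ℝ) < n := by rw [← he1 p]; linarith
    have h2 : |p.2| ≤ (n : ℤ) := by
      rw [Int.abs_eq_natAbs]; exact_mod_cast h0'.le
    have h1'' : |p.1| ≤ (n : ℤ) := by
      rw [Int.abs_eq_natAbs]; exact_mod_cast h1'.le
    rw [Set.mem_Icc]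
    constructor <;> constructor
    · exact neg_le_of_abs_le h1''
    · exact neg_le_of_abs_le h2
    · exact le_of_abs_le h1''
    · exact le_of_abs_le h2
  refine Summable.of_norm_bounded_eventually hsum1 ?_
  rw [Filter.eventually_cofinite]
  apply Set.Finite.subset hfin
  intro p hp
  simp only [Set.mem_setOf_eq] at hp ⊢
  intro hTle
  apply hp
  -- now prove the bound assuming T ≤ ‖e p‖
  have hx0 : e p ≠ 0 := by
    intro h0
    rw [h0, norm_zero] at hTle
    have : (1:ℝ) ≤ 0 := le_trans (le_max_left _ _) hTle
    linarith
  have hkey : r0 * ‖e p‖ ≤ ‖(e p 0 : ℂ) * ζ + (e p 1 : ℂ)‖ :=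
    EisensteinSeries.r_mul_max_le ζ hx0
  have hlat : ((e p 0 : ℂ) * ζ + (e p 1 : ℂ)) = lat τ p := by
    rw [he0 p, he1 p]
    simp only [lat]
    have : (ζ : ℂ) = τ := rfl
    rw [this]; ring
  rw [hlat] at hkey
  have hzb : 2 * (‖z‖ + 1) / r0 ≤ ‖e p‖ := le_trans (le_max_right _ _) hTle
  have hzb' : 2 * (‖z‖ + 1) ≤ r0 * ‖e p‖ := by
    rw [div_le_iff₀ hr0pos] at hzb; linarith [hzb]
  have hlow : r0 / 2 * ‖e p‖ ≤ ‖lat τ p + z‖ := by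
    have h1 : ‖lat τ p‖ - ‖z‖ ≤ ‖lat τ p + z‖ := by
      have h2 := norm_add_le (lat τ p + z) (-z)
      simp only [add_neg_cancel_right, norm_neg] at h2
      linarith
    nlinarith [norm_nonneg z]
  have hpos : 0 < r0 / 2 * ‖e p‖ := by
    have : (1:ℝ) ≤ ‖e p‖ := le_trans (le_max_left _ _) hTle
    nlinarith
  rw [Real.norm_of_nonneg (Real.rpow_nonneg (norm_nonneg _) _)]
  calc ‖lat τ p + z‖ ^ (-σ) ≤ (r0 / 2 * ‖e p‖) ^ (-σ) :=
        Real.rpow_le_rpow_of_nonpos hpos hlow (by linarith)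
    _ = (r0 / 2) ^ (-σ) * ‖e p‖ ^ (-σ) :=
        Real.mul_rpow (by positivity) (norm_nonneg _)

/-- Lemma 3.1: the Fourier-integral representation
R(s,x,z,y) = (πα Γ(s) χ(z,x))⁻¹ ∫_{ℝ} I(s, z, x, k/(πα)) e^{−2πiky} dk for Re s > 3/2,
the integral over k being absolutely convergent. -/
theorem Rser_fourier_representation (τ : ℂ) (hτ : 0 < τ.im) (s : ℂ)
    (hs : 3 / 2 < s.re) (x z : ℂ) (hz : z ∉ Set.range (lat τ)) (y : ℝ) :
    MeasureTheory.Integrable (fun k : ℝ =>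
      Iser τ s z x (k / (Real.pi * alf τ)) *
        Complex.exp (-2 * Real.pi * Complex.I * k * y)) ∧
    Rser τ s x z y =
      (((Real.pi * alf τ : ℝ) : ℂ) * Complex.Gamma s * chi τ z x)⁻¹ *
        ∫ k : ℝ, Iser τ s z x (k / (Real.pi * alf τ)) *
          Complex.exp (-2 * Real.pi * Complex.I * k * y) := by
  classical
  have hπ := Real.pi_pos
  have hα : 0 < alf τ := div_pos hτ hπ
  have hs0 : 0 < s.re := by linarith
  -- positivity of the shifted lattice norms
  have hlatne : ∀ p : ℤ × ℤ, lat τ p + z ≠ 0 := by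
    intro p h
    apply hz
    refine ⟨(-p.1, -p.2), ?_⟩
    have hz' : z = -(lat τ p) := by linear_combination h
    rw [hz', lat, lat]
    push_cast
    ring
  have hAp : ∀ p : ℤ × ℤ, 0 < (‖lat τ p + z‖)^2 :=
    fun p => pow_pos (norm_pos_iff.mpr (hlatne p)) 2
  -- character basics
  have hchinorm : ∀ γ w : ℂ, ‖chi τ γ w‖ = 1 := by
    intro γ w
    have hcr : ((starRingEnd ℂ) γ * w).re = (γ * (starRingEnd ℂ) w).re := by
      rw [show (starRingEnd ℂ) γ * w = (starRingEnd ℂ) (γ * (starRingEnd ℂ) w) by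
        rw [map_mul, Complex.conj_conj], Complex.conj_re]
    rw [chi, Complex.norm_exp, Complex.re_ofReal_mul, Complex.sub_re, hcr, sub_self,
      mul_zero, Real.exp_zero]
  have hchiadd : ∀ γ w v : ℂ, chi τ (γ + w) v = chi τ γ v * chi τ w v := by
    intro γ w v
    rw [chi, chi, chi, ← Complex.exp_add]
    congr 1
    rw [map_add]
    ring
  have hchine : chi τ z x ≠ 0 := Complex.exp_ne_zero _
  have hGne : Complex.Gamma s ≠ 0 := by
    apply Complex.Gamma_ne_zero
    intro m h
    rw [h] at hs0
    simp only [Complex.neg_re, Complex.natCast_re] at hs0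
    have : (0:ℝ) ≤ (m:ℝ) := Nat.cast_nonneg m
    linarith
  have hcne : ((Real.pi * alf τ : ℝ) : ℂ) ≠ 0 :=
    Complex.ofReal_ne_zero.mpr (by positivity)
  -- rewrite Iser in terms of Jfun
  have hkc : ∀ k : ℝ, Real.pi^2 * (k/(Real.pi * alf τ))^2 = k^2/(alf τ)^2 := by
    intro k
    field_simp
  have hIser : ∀ k : ℝ, Iser τ s z x (k / (Real.pi * alf τ)) = (Real.sqrt Real.pi : ℂ) *
      ∑' p : ℤ × ℤ, chi τ (lat τ p + z) x *
        Jfun s (alf τ) ((‖lat τ p + z‖)^2) k := by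
    intro k
    rw [Iser]
    congr 1
    refine tsum_congr fun p => ?_
    congr 1
    rw [Jfun]
    simp only [hkc]
  -- the summand family
  set F : ℤ × ℤ → ℝ → ℂ := fun p k => ((Real.sqrt Real.pi : ℝ) : ℂ) * chi τ (lat τ p + z) x *
    (Jfun s (alf τ) ((‖lat τ p + z‖)^2) k *
      Complex.exp (-2 * Real.pi * Complex.I * k * y)) with hF
  have hIserE : ∀ k : ℝ, Iser τ s z x (k / (Real.pi * alf τ)) *
      Complex.exp (-2 * Real.pi * Complex.I * k * y) = ∑' p : ℤ × ℤ, F p k := by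
    intro k
    rw [hIser k, ← tsum_mul_left, ← tsum_mul_right]
    refine tsum_congr fun p => ?_
    rw [hF]
    ring
  -- integrability of each F p
  have hFint : ∀ p : ℤ × ℤ, Integrable (F p) volume := by
    intro p
    have h1 := ((key (s := s) (α := alf τ) (A := (‖lat τ p + z‖)^2) y
      hs hα (hAp p)).1.const_mul
      (((Real.sqrt Real.pi : ℝ) : ℂ) * chi τ (lat τ p + z) x))
    simp only [hF]
    exact h1.congr (Eventually.of_forall fun k => by ring)
  -- norm of F
  have hFnorm : ∀ p : ℤ × ℤ, ∀ k : ℝ, ‖F p k‖ = Real.sqrt Real.pi *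
      ‖Jfun s (alf τ) ((‖lat τ p + z‖)^2) k *
        Complex.exp (-2 * Real.pi * Complex.I * k * y)‖ := by
    intro p k
    rw [hF]
    simp only [norm_mul, Complex.norm_real,
      Real.norm_of_nonneg (Real.sqrt_nonneg _), hchinorm, mul_one]
  -- summability of the lattice sums
  have h2s : (2:ℝ) < 2 * s.re - 1 := by linarith
  have h2s' : (2:ℝ) < 2 * s.re := by linarith
  have hsum1 : Summable fun p : ℤ × ℤ => ‖lat τ p + z‖ ^ (-(2 * s.re - 1)) :=
    lat_summable τ hτ z h2s
  have hsum2 : Summable fun p : ℤ × ℤ => ‖lat τ p + z‖ ^ (-(2 * s.re)) :=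
    lat_summable τ hτ z h2s'
  have hsq : ∀ (p : ℤ × ℤ) (e : ℝ),
      ((‖lat τ p + z‖)^2) ^ (-e) = ‖lat τ p + z‖ ^ (-(2*e)) := by
    intro p e
    rw [← Real.rpow_natCast (‖lat τ p + z‖) 2,
      ← Real.rpow_mul (norm_nonneg _)]
    congr 1
    push_cast
    ring
  -- pointwise summability of norms
  have hptw : ∀ k : ℝ, Summable fun p : ℤ × ℤ => ‖F p k‖ := by
    intro k
    refine Summable.of_nonneg_of_le (fun p => norm_nonneg _)
      (f := fun p => Real.sqrt Real.pi * Real.Gamma (s.re - 1/2) *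
        (‖lat τ p + z‖ ^ (-(2 * s.re - 1)))) ?_ (hsum1.mul_left _)
    · intro p
      rw [hFnorm p k, norm_mul]
      have h1 : ‖Complex.exp (-2 * Real.pi * Complex.I * (k:ℂ) * (y:ℂ))‖ = 1 := by
        rw [Complex.norm_exp]
        have : (-2 * (Real.pi:ℂ) * Complex.I * (k:ℂ) * (y:ℂ)).re = 0 := by simp
        rw [this, Real.exp_zero]
      rw [h1, mul_one]
      have h2 := Jfun_norm_le (α := alf τ) hs hα (hAp p) k
      have h3 : ((‖lat τ p + z‖)^2) ^ (-(s.re - 1/2)) =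
          ‖lat τ p + z‖ ^ (-(2 * s.re - 1)) := by
        rw [hsq p (s.re - 1/2)]
        congr 1
        ring
      rw [h3] at h2
      calc Real.sqrt Real.pi * ‖Jfun s (alf τ) ((‖lat τ p + z‖)^2) k‖
          ≤ Real.sqrt Real.pi * (Real.Gamma (s.re - 1/2) *
            ‖lat τ p + z‖ ^ (-(2 * s.re - 1))) :=
            mul_le_mul_of_nonneg_left h2 (Real.sqrt_nonneg _)
        _ = Real.sqrt Real.pi * Real.Gamma (s.re - 1/2) *
            (‖lat τ p + z‖ ^ (-(2 * s.re - 1))) := by ring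
  -- summability of the integrals of norms
  have hFintnorm : ∀ p : ℤ × ℤ, (∫ k : ℝ, ‖F p k‖) ≤
      Real.sqrt Real.pi * (alf τ * Real.sqrt Real.pi * Real.Gamma s.re) *
        (‖lat τ p + z‖ ^ (-(2 * s.re))) := by
    intro p
    have h0 : (∫ k : ℝ, ‖F p k‖) = Real.sqrt Real.pi *
        ∫ k : ℝ, ‖Jfun s (alf τ) ((‖lat τ p + z‖)^2) k *
          Complex.exp (-2 * Real.pi * Complex.I * k * y)‖ := by
      rw [← MeasureTheory.integral_const_mul]
      exact integral_congr_ae (Eventually.of_forall fun k => hFnorm p k)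
    rw [h0]
    have h1 := (key (s := s) (α := alf τ) (A := (‖lat τ p + z‖)^2) y
      hs hα (hAp p)).2.2
    rw [hsq p s.re] at h1
    calc Real.sqrt Real.pi * ∫ k : ℝ, ‖Jfun s (alf τ) ((‖lat τ p + z‖)^2) k *
          Complex.exp (-2 * Real.pi * Complex.I * k * y)‖
        ≤ Real.sqrt Real.pi * (alf τ * Real.sqrt Real.pi * Real.Gamma s.re *
            ‖lat τ p + z‖ ^ (-(2 * s.re))) :=
          mul_le_mul_of_nonneg_left h1 (Real.sqrt_nonneg _)
      _ = Real.sqrt Real.pi * (alf τ * Real.sqrt Real.pi * Real.Gamma s.re) *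
          (‖lat τ p + z‖ ^ (-(2 * s.re))) := by ring
  have hFsumint : Summable fun p : ℤ × ℤ => ∫ k : ℝ, ‖F p k‖ := by
    exact Summable.of_nonneg_of_le
      (fun p => integral_nonneg fun k => norm_nonneg _) hFintnorm (hsum2.mul_left _)
  -- integrability of the total function
  have hItot : Integrable (fun k : ℝ => ∑' p : ℤ × ℤ, F p k) volume :=
    integrable_tsum' hFint hptw hFsumint
  constructor
  · exact hItot.congr (Eventually.of_forall fun k => (hIserE k).symm)
  · -- the evaluation
    have hssC : ((Real.sqrt Real.pi : ℝ):ℂ) * ((Real.sqrt Real.pi : ℝ):ℂ) =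
        ((Real.pi : ℝ):ℂ) := by
      rw [← Complex.ofReal_mul, Real.mul_self_sqrt hπ.le]
    have hterm : ∀ p : ℤ × ℤ, (∫ k : ℝ, F p k) =
        (((Real.pi * alf τ : ℝ) : ℂ) * Complex.Gamma s * chi τ z x) *
          (chi τ (lat τ p) x *
            (((Real.pi * alf τ * y) ^ 2 + (‖z + lat τ p‖) ^ 2 : ℝ) : ℂ) ^ (-s)) := by
      intro p
      have h0 : (∫ k : ℝ, F p k) = (((Real.sqrt Real.pi : ℝ) : ℂ) * chi τ (lat τ p + z) x) *
          ∫ k : ℝ, Jfun s (alf τ) ((‖lat τ p + z‖)^2) k *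
            Complex.exp (-2 * Real.pi * Complex.I * k * y) := by
        rw [← MeasureTheory.integral_const_mul]
      rw [h0, (key (s := s) (α := alf τ) (A := (‖lat τ p + z‖)^2) y
        hs hα (hAp p)).2.1]
      rw [hchiadd (lat τ p) z x]
      rw [show ‖z + lat τ p‖ = ‖lat τ p + z‖ from by rw [add_comm]]
      rw [show ((alf τ * Real.sqrt Real.pi : ℝ):ℂ) =
        ((alf τ : ℝ):ℂ) * ((Real.sqrt Real.pi : ℝ):ℂ) from Complex.ofReal_mul _ _]
      rw [show ((Real.pi * alf τ : ℝ):ℂ) =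
        ((Real.pi : ℝ):ℂ) * ((alf τ : ℝ):ℂ) from Complex.ofReal_mul _ _]
      linear_combination (chi τ (lat τ p) x * chi τ z x * Complex.Gamma s *
        ((((Real.pi * alf τ * y) ^ 2 + (‖lat τ p + z‖) ^ 2 : ℝ)) : ℂ) ^ (-s) *
        ((alf τ : ℝ):ℂ)) * hssC
    have hint : (∫ k : ℝ, Iser τ s z x (k / (Real.pi * alf τ)) *
        Complex.exp (-2 * Real.pi * Complex.I * k * y)) =
        (((Real.pi * alf τ : ℝ) : ℂ) * Complex.Gamma s * chi τ z x) * Rser τ s x z y := by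
      calc (∫ k : ℝ, Iser τ s z x (k / (Real.pi * alf τ)) *
            Complex.exp (-2 * Real.pi * Complex.I * k * y))
          = ∫ k : ℝ, ∑' p : ℤ × ℤ, F p k :=
            integral_congr_ae (Eventually.of_forall fun k => hIserE k)
        _ = ∑' p : ℤ × ℤ, ∫ k : ℝ, F p k :=
            (integral_tsum_of_summable_integral_norm hFint hFsumint).symm
        _ = ∑' p : ℤ × ℤ, (((Real.pi * alf τ : ℝ) : ℂ) * Complex.Gamma s * chi τ z x) *
              (chi τ (lat τ p) x *
                (((Real.pi * alf τ * y) ^ 2 + (‖z + lat τ p‖) ^ 2 : ℝ) : ℂ) ^ (-s)) :=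
            tsum_congr hterm
        _ = (((Real.pi * alf τ : ℝ) : ℂ) * Complex.Gamma s * chi τ z x) * Rser τ s x z y := by
            rw [tsum_mul_left, Rser]
    rw [hint]
    rw [inv_mul_cancel_left₀ (mul_ne_zero (mul_ne_zero hcne hGne) hchine)]
end
end

section
/- (Functional equation for the lattice Gaussian sum) For every t > 0 and x, x₀ ∈ ℂ, Θ(t, x, x₀) = (αt)^{−1} · Θ(α^{−2} t^{−1}, x₀, x) · χ(x₀, x). -/
open Real Complex

noncomputable section
set_option maxHeartbeats 1600000

/-- The lattice Gaussian sum Θ(t, x, x₀) = Σ_{γ∈Γ} exp(−t|x+γ|²) χ(γ, x₀). -/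
def Theta (τ : ℂ) (t : ℝ) (x x₀ : ℂ) : ℂ :=
  ∑' p : ℤ × ℤ, (Real.exp (-t * ‖x + lat τ p‖ ^ 2) : ℂ) * chi τ (lat τ p) x₀

namespace ThetaAux

lemma summable_gauss_int (a b c : ℝ) (ha : 0 < a) :
    Summable fun n : ℤ => rexp (-a * n ^ 2 + b * n + c) := by
  have h := (summable_jacobiTheta₂_term_iff (-Complex.I * (b / (2 * Real.pi)))
      (Complex.I * (a / Real.pi))).mpr (by
        simp [Complex.mul_im, Real.pi_pos.le, div_pos ha Real.pi_pos])
  rw [← summable_norm_iff] at h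
  have h2 := h.mul_left (rexp c)
  refine h2.congr fun n => ?_
  rw [jacobiTheta₂_term, Complex.norm_exp, ← Real.exp_add]
  congr 1
  have hπ := Real.pi_ne_zero
  have key : (2 * ↑Real.pi * Complex.I * ↑n * (-Complex.I * (↑b / (2 * ↑Real.pi))) +
      ↑Real.pi * Complex.I * ↑n ^ 2 * (Complex.I * (↑a / ↑Real.pi))) =
      Complex.ofReal (-a * n ^ 2 + b * n) := by
    have hπc : (Real.pi : ℂ) ≠ 0 := Complex.ofReal_ne_zero.mpr hπ
    push_cast
    field_simp
    linear_combination ((n : ℂ) ^ 2 * a - (n : ℂ) * b) *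
      Complex.I_sq
  rw [key, Complex.ofReal_re]
  ring

lemma summable_gauss_shift (a r : ℝ) (ha : 0 < a) :
    Summable fun n : ℤ => rexp (-a * ((n : ℝ) + r) ^ 2) := by
  refine (summable_gauss_int a (-2 * a * r) (-a * r ^ 2) ha).congr fun n => ?_
  congr 1
  ring

lemma summable_gauss2 (t u v X Y : ℝ) (ht : 0 < t) (hv : v ≠ 0) :
    Summable fun p : ℤ × ℤ =>
      rexp (-t * ((X + p.1 + p.2 * u) ^ 2 + (Y + p.2 * v) ^ 2)) := by
  have hW : (0:ℝ) < 1 + u ^ 2 + v ^ 2 := by positivity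
  have hv2 : (0:ℝ) < v ^ 2 := by positivity
  set δ : ℝ := t * v ^ 2 / (2 * (1 + u ^ 2 + v ^ 2)) with hδdef
  have hδ : 0 < δ := by positivity
  have maj : Summable fun p : ℤ × ℤ =>
      (rexp (t * (X ^ 2 + Y ^ 2)) * rexp (-δ * p.1 ^ 2 + 0 * p.1 + 0)) *
        rexp (-δ * p.2 ^ 2 + 0 * p.2 + 0) :=
    Summable.mul_of_nonneg ((summable_gauss_int δ 0 0 hδ).mul_left _)
      (summable_gauss_int δ 0 0 hδ) (fun m => by positivity) (fun n => by positivity)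
  refine maj.of_nonneg_of_le (fun p => (Real.exp_pos _).le) fun p => ?_
  obtain ⟨m, n⟩ := p
  rw [mul_assoc, ← Real.exp_add, ← Real.exp_add, Real.exp_le_exp]
  have key : t * v ^ 2 * ((m:ℝ) ^ 2 + (n:ℝ) ^ 2) ≤
      2 * (1 + u ^ 2 + v ^ 2) *
        (t * ((X + m + n * u) ^ 2 + (Y + n * v) ^ 2) + t * (X ^ 2 + Y ^ 2)) := by
    have h1 : ((m:ℝ) + n * u) ^ 2 + ((n:ℝ) * v) ^ 2 ≤
        2 * ((X + m + n * u) ^ 2 + (Y + n * v) ^ 2 + X ^ 2 + Y ^ 2) := by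
      nlinarith [sq_nonneg (2 * X + ((m:ℝ) + n * u)), sq_nonneg (2 * Y + (n:ℝ) * v)]
    have h2 : v ^ 2 * ((m:ℝ) ^ 2 + (n:ℝ) ^ 2) ≤
        (1 + u ^ 2 + v ^ 2) * (((m:ℝ) + n * u) ^ 2 + ((n:ℝ) * v) ^ 2) := by
      nlinarith [sq_nonneg (u * ((m:ℝ) + n * u) + v ^ 2 * n), sq_nonneg ((m:ℝ) + n * u)]
    nlinarith [mul_le_mul_of_nonneg_left h1 (le_of_lt hW), ht.le]
  have hδm : δ * ((m:ℝ) ^ 2 + (n:ℝ) ^ 2) ≤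
      t * ((X + m + n * u) ^ 2 + (Y + n * v) ^ 2) + t * (X ^ 2 + Y ^ 2) := by
    rw [hδdef, div_mul_eq_mul_div, div_le_iff₀ (by positivity)]
    linarith [key]
  nlinarith [hδm]

lemma re_chi_arg (a : ℝ) (γ x : ℂ) :
    ((a : ℂ) * (γ * (starRingEnd ℂ) x - (starRingEnd ℂ) γ * x)).re = 0 := by
  simp [Complex.mul_re, Complex.mul_im, Complex.sub_re, Complex.conj_re, Complex.conj_im]

lemma abs_chi (τ γ x : ℂ) : ‖chi τ γ x‖ = 1 := by
  rw [chi, Complex.norm_exp, re_chi_arg, Real.exp_zero]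

lemma summable_theta_term (τ : ℂ) (hτ : 0 < τ.im) (t : ℝ) (ht : 0 < t) (x x₀ : ℂ) :
    Summable fun p : ℤ × ℤ =>
      (Real.exp (-t * ‖x + lat τ p‖ ^ 2) : ℂ) * chi τ (lat τ p) x₀ := by
  refine Summable.of_norm ?_
  have habs : ∀ p : ℤ × ℤ, ‖x + lat τ p‖ ^ 2 =
      (x.re + p.1 + p.2 * τ.re) ^ 2 + (x.im + p.2 * τ.im) ^ 2 := by
    intro p
    rw [← Complex.normSq_eq_norm_sq, Complex.normSq_apply]
    simp [lat]
    ring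
  refine (summable_gauss2 t τ.re τ.im x.re x.im ht hτ.ne').congr fun p => ?_
  rw [norm_mul, abs_chi, mul_one,
    Complex.norm_real, Real.norm_eq_abs, abs_of_pos (Real.exp_pos _), habs]

lemma keyA (t u v X Y C D : ℝ) (ht : t ≠ 0) (hv : v ≠ 0) (m n : ℤ) :
    (↑(-t * ((X + m + n * u) ^ 2 + (Y + n * v) ^ 2)) : ℂ) +
      ↑(Real.pi / v) *
        (((m : ℂ) + n * (↑u + ↑v * I)) * (↑C - ↑D * I) -
          ((m : ℂ) + n * (↑u - ↑v * I)) * (↑C + ↑D * I)) =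
    -↑Real.pi * ↑(t / Real.pi) * (m : ℂ) ^ 2 +
      2 * ↑Real.pi * (↑(-(t / Real.pi) * (X + n * u)) + ↑(-(D / v)) * I) * m +
      (↑(-t * ((X + n * u) ^ 2 + (Y + n * v) ^ 2)) +
        ↑(2 * Real.pi / v * n * (v * C - u * D)) * I) := by
  have hπ := Real.pi_ne_zero
  have hπc : (Real.pi : ℂ) ≠ 0 := Complex.ofReal_ne_zero.mpr hπ
  have hvc : (v : ℂ) ≠ 0 := Complex.ofReal_ne_zero.mpr hv
  push_cast
  field_simp
  ring

lemma keyB (t u v X Y C D : ℝ) (ht : t ≠ 0) (hv : v ≠ 0) (m n : ℤ) :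
    ((↑(-t * ((X + n * u) ^ 2 + (Y + n * v) ^ 2)) : ℂ) +
        ↑(2 * Real.pi / v * n * (v * C - u * D)) * I) +
      ↑(-(Real.pi ^ 2 / t)) *
        ((m : ℂ) + I * (↑(-(t / Real.pi) * (X + n * u)) + ↑(-(D / v)) * I)) ^ 2 =
    -↑Real.pi * ↑(t * v ^ 2 / Real.pi) * (n : ℂ) ^ 2 +
      2 * ↑Real.pi * (↑(-(t / Real.pi) * (Y * v)) + ↑(C + u * m) * I) * n +
      (↑(-t * Y ^ 2 - Real.pi ^ 2 / t * (m + D / v) ^ 2) +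
        ↑(2 * Real.pi * (m + D / v) * X) * I) := by
  have hπ := Real.pi_ne_zero
  simp only [Complex.ext_iff, pow_two, Complex.add_re, Complex.add_im, Complex.mul_re,
    Complex.mul_im, Complex.sub_re, Complex.sub_im, Complex.neg_re, Complex.neg_im,
    Complex.I_re, Complex.I_im, Complex.ofReal_re, Complex.ofReal_im, Complex.intCast_re,
    Complex.intCast_im, Complex.re_ofNat, Complex.im_ofNat, mul_zero, zero_mul, mul_one,
    one_mul, sub_zero, zero_sub, add_zero, zero_add, neg_neg, neg_zero]
  constructor <;> (push_cast; field_simp; ring)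

lemma keyC (t u v X Y C D : ℝ) (ht : t ≠ 0) (hv : v ≠ 0) (m n : ℤ) :
    ((↑(-t * Y ^ 2 - Real.pi ^ 2 / t * (m + D / v) ^ 2) : ℂ) +
        ↑(2 * Real.pi * (m + D / v) * X) * I) +
      ↑(-(Real.pi ^ 2 / (t * v ^ 2))) *
        ((n : ℂ) + I * (↑(-(t / Real.pi) * (Y * v)) + ↑(C + u * m) * I)) ^ 2 =
    (↑(-(Real.pi ^ 2 / (v ^ 2 * t)) * ((C + (-n : ℤ) + m * u) ^ 2 + (D + m * v) ^ 2)) +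
        ↑(Real.pi / v) *
          ((((-n : ℤ) : ℂ) + (m : ℂ) * (↑u + ↑v * I)) * (↑X - ↑Y * I) -
            (((-n : ℤ) : ℂ) + (m : ℂ) * (↑u - ↑v * I)) * (↑X + ↑Y * I))) +
      ↑(Real.pi / v) *
        ((↑C + ↑D * I) * (↑X - ↑Y * I) - (↑C - ↑D * I) * (↑X + ↑Y * I)) := by
  have hπ := Real.pi_ne_zero
  simp only [Complex.ext_iff, pow_two, Complex.add_re, Complex.add_im, Complex.mul_re,
    Complex.mul_im, Complex.sub_re, Complex.sub_im, Complex.neg_re, Complex.neg_im,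
    Complex.I_re, Complex.I_im, Complex.ofReal_re, Complex.ofReal_im, Complex.intCast_re,
    Complex.intCast_im, Complex.re_ofNat, Complex.im_ofNat, mul_zero, zero_mul, mul_one,
    one_mul, sub_zero, zero_sub, add_zero, zero_add, neg_neg, neg_zero]
  constructor <;> (push_cast; field_simp; ring)

end ThetaAux

/-- Functional equation for the lattice Gaussian sum:
Θ(t, x, x₀) = (αt)⁻¹ Θ(α⁻²t⁻¹, x₀, x) χ(x₀, x) for all t > 0. -/
theorem Theta_functional_equation (τ : ℂ) (hτ : 0 < τ.im) (t : ℝ) (ht : 0 < t) (x x₀ : ℂ) :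
    Theta τ t x x₀ =
      ((alf τ * t : ℝ) : ℂ)⁻¹ * Theta τ (((alf τ) ^ 2)⁻¹ * t⁻¹) x₀ x * chi τ x₀ x := by
  classical
  have hπ : 0 < Real.pi := Real.pi_pos
  set u := τ.re with hu
  set v := τ.im with hvdef
  set X := x.re with hXdef
  set Y := x.im with hYdef
  set C := x₀.re with hCdef
  set D := x₀.im with hDdef
  have hv : 0 < v := hτ
  have hvne : v ≠ 0 := hv.ne'
  have htne : t ≠ 0 := ht.ne'
  have hπne : Real.pi ≠ 0 := hπ.ne'
  have hτeq : τ = (u : ℂ) + (v : ℂ) * I := (Complex.re_add_im τ).symm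
  have hx0eq : x₀ = (C : ℂ) + (D : ℂ) * I := (Complex.re_add_im x₀).symm
  have hxeq : x = (X : ℂ) + (Y : ℂ) * I := (Complex.re_add_im x).symm
  have hconjτ : (starRingEnd ℂ) τ = (u : ℂ) - (v : ℂ) * I := by
    rw [hτeq]; simp [map_add, map_mul, Complex.conj_ofReal, Complex.conj_I]; ring
  have hconjx0 : (starRingEnd ℂ) x₀ = (C : ℂ) - (D : ℂ) * I := by
    rw [hx0eq]; simp [map_add, map_mul, Complex.conj_ofReal, Complex.conj_I]; ring
  have hconjx : (starRingEnd ℂ) x = (X : ℂ) - (Y : ℂ) * I := by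
    rw [hxeq]; simp [map_add, map_mul, Complex.conj_ofReal, Complex.conj_I]; ring
  have half : alf τ = v / Real.pi := rfl
  have hαinv : ((alf τ)⁻¹ : ℝ) = Real.pi / v := by rw [half, inv_div]
  have hαpos : 0 < alf τ := by rw [half]; positivity
  have hspos : 0 < ((alf τ) ^ 2)⁻¹ * t⁻¹ := by positivity
  have hs : ((alf τ) ^ 2)⁻¹ * t⁻¹ = Real.pi ^ 2 / (v ^ 2 * t) := by
    rw [half]; field_simp
  -- the exponent functions
  set b1 : ℤ → ℂ := fun n => (↑(-(t / Real.pi) * (X + (n : ℝ) * u)) + ↑(-(D / v)) * I : ℂ)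
    with hb1
  set c1 : ℤ → ℂ := fun n => (↑(-t * ((X + (n : ℝ) * u) ^ 2 + (Y + (n : ℝ) * v) ^ 2)) +
    ↑(2 * Real.pi / v * (n : ℝ) * (v * C - u * D)) * I : ℂ) with hc1
  set b2 : ℤ → ℂ := fun m => (↑(-(t / Real.pi) * (Y * v)) + ↑(C + u * (m : ℝ)) * I : ℂ) with hb2
  set c2 : ℤ → ℂ := fun m => (↑(-t * Y ^ 2 - Real.pi ^ 2 / t * ((m : ℝ) + D / v) ^ 2) +
    ↑(2 * Real.pi * ((m : ℝ) + D / v) * X) * I : ℂ) with hc2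
  set E1 : ℤ → ℤ → ℂ := fun m n => -↑Real.pi * ↑(t / Real.pi) * (m : ℂ) ^ 2 +
    2 * ↑Real.pi * b1 n * (m : ℂ) + c1 n with hE1
  set H : ℤ → ℤ → ℂ := fun m n => c1 n + ↑(-(Real.pi ^ 2 / t)) * ((m : ℂ) + I * b1 n) ^ 2
    with hH
  set Φ : ℤ → ℤ → ℂ := fun m n => c2 m + ↑(-(Real.pi ^ 2 / (t * v ^ 2))) *
    ((n : ℂ) + I * b2 m) ^ 2 with hΦ
  have ha1 : 0 < ((↑(t / Real.pi) : ℂ)).re := by rw [Complex.ofReal_re]; positivity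
  have ha2 : 0 < ((↑(t * v ^ 2 / Real.pi) : ℂ)).re := by rw [Complex.ofReal_re]; positivity
  have hdiv1 : -(↑Real.pi : ℂ) / ↑(t / Real.pi) = (↑(-(Real.pi ^ 2 / t)) : ℂ) := by
    have hπc : (Real.pi : ℂ) ≠ 0 := Complex.ofReal_ne_zero.mpr hπne
    have htc : (t : ℂ) ≠ 0 := Complex.ofReal_ne_zero.mpr htne
    push_cast
    field_simp
  have hdiv2 : -(↑Real.pi : ℂ) / ↑(t * v ^ 2 / Real.pi) =
      (↑(-(Real.pi ^ 2 / (t * v ^ 2))) : ℂ) := by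
    have hπc : (Real.pi : ℂ) ≠ 0 := Complex.ofReal_ne_zero.mpr hπne
    have htc : (t : ℂ) ≠ 0 := Complex.ofReal_ne_zero.mpr htne
    have hvc : (v : ℂ) ≠ 0 := Complex.ofReal_ne_zero.mpr hvne
    push_cast
    field_simp
  -- term identity on the LHS
  have hterm : ∀ p : ℤ × ℤ,
      (Real.exp (-t * ‖x + lat τ p‖ ^ 2) : ℂ) * chi τ (lat τ p) x₀ =
        Complex.exp (E1 p.1 p.2) := by
    intro p
    have habs : ‖x + lat τ p‖ ^ 2 =
        (X + (p.1 : ℝ) + (p.2 : ℝ) * u) ^ 2 + (Y + (p.2 : ℝ) * v) ^ 2 := by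
      rw [← Complex.normSq_eq_norm_sq, Complex.normSq_apply]
      simp [lat]
      ring
    have hlat : lat τ p = (p.1 : ℂ) + (p.2 : ℂ) * ((u : ℂ) + (v : ℂ) * I) := by
      rw [lat, ← hτeq]
    have hlatconj : (starRingEnd ℂ) (lat τ p) =
        (p.1 : ℂ) + (p.2 : ℂ) * ((u : ℂ) - (v : ℂ) * I) := by
      rw [lat]
      simp [map_add, map_mul, Complex.conj_ofReal, hconjτ]
    rw [chi, hαinv, Complex.ofReal_exp, ← Complex.exp_add]
    congr 1
    rw [habs, hlatconj, hlat, hconjx0, hx0eq]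
    simp only [hE1, hb1, hc1]
    exact ThetaAux.keyA t u v X Y C D htne hvne p.1 p.2
  have hsum0 := ThetaAux.summable_theta_term τ hτ t ht x x₀
  have hsumE1 : Summable fun p : ℤ × ℤ => Complex.exp (E1 p.1 p.2) := hsum0.congr hterm
  -- step 1 : unfold and write as iterated sum, inner over the first coordinate
  have step1 : Theta τ t x x₀ = ∑' n : ℤ, ∑' m : ℤ, Complex.exp (E1 m n) := by
    rw [Theta, tsum_congr hterm,
      ← (Equiv.prodComm ℤ ℤ).tsum_eq (fun p : ℤ × ℤ => Complex.exp (E1 p.1 p.2))]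
    exact hsumE1.prod_symm.tsum_prod
  -- step 2 : Poisson summation in m, for each fixed n
  have step2 : ∀ n : ℤ, ∑' m : ℤ, Complex.exp (E1 m n) =
      (1 / (↑(t / Real.pi) : ℂ) ^ (1 / 2 : ℂ)) * ∑' m : ℤ, Complex.exp (H m n) := by
    intro n
    have hsplit : ∀ m : ℤ, Complex.exp (E1 m n) = Complex.exp (c1 n) *
        Complex.exp (-↑Real.pi * ↑(t / Real.pi) * (m : ℂ) ^ 2 +
          2 * ↑Real.pi * b1 n * (m : ℂ)) := by
      intro m
      rw [← Complex.exp_add]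
      congr 1
      simp only [hE1]
      ring
    rw [tsum_congr hsplit, tsum_mul_left, Complex.tsum_exp_neg_quadratic ha1 (b1 n)]
    simp only [hdiv1]
    rw [← mul_assoc, mul_comm (Complex.exp (c1 n)), mul_assoc, ← tsum_mul_left]
    congr 1
    refine tsum_congr fun m => ?_
    rw [← Complex.exp_add]
  -- summability of the intermediate terms, for interchanging the sums
  have hreH : ∀ m n : ℤ, (H m n).re =
      -(Real.pi ^ 2 / t) * ((m : ℝ) + D / v) ^ 2 + (-(t * v ^ 2) * (n : ℝ) ^ 2 +
        -(2 * t * Y * v) * (n : ℝ) + -(t * Y ^ 2)) := by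
    intro m n
    simp only [hH, hc1, hb1]
    simp only [pow_two, Complex.add_re, Complex.mul_re, Complex.mul_im, Complex.add_im,
      Complex.I_re, Complex.I_im, Complex.ofReal_re, Complex.ofReal_im, Complex.intCast_re,
      Complex.intCast_im, mul_zero, zero_mul, mul_one, one_mul, sub_zero, zero_sub,
      add_zero, zero_add, neg_neg, neg_zero]
    field_simp
    ring
  have hnormH : ∀ p : ℤ × ℤ, ‖Complex.exp (H p.1 p.2)‖ =
      rexp (-(Real.pi ^ 2 / t) * ((p.1 : ℝ) + D / v) ^ 2) *
        rexp (-(t * v ^ 2) * (p.2 : ℝ) ^ 2 + -(2 * t * Y * v) * (p.2 : ℝ) + -(t * Y ^ 2)) := by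
    intro p
    rw [Complex.norm_exp, ← Real.exp_add, hreH p.1 p.2]
  have hsumH : Summable (Function.uncurry fun m n : ℤ => Complex.exp (H m n)) := by
    rw [Function.uncurry_def]
    refine Summable.of_norm ?_
    refine (Summable.mul_of_nonneg
      (ThetaAux.summable_gauss_shift (Real.pi ^ 2 / t) (D / v) (by positivity))
      (ThetaAux.summable_gauss_int (t * v ^ 2) (-(2 * t * Y * v)) (-(t * Y ^ 2))
        (by positivity)) (fun m => (Real.exp_pos _).le)
      (fun n => (Real.exp_pos _).le)).congr fun p => ?_
    rw [hnormH p]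
  -- step 3 : Poisson summation in n, for each fixed m
  have step3 : ∀ m : ℤ, ∑' n : ℤ, Complex.exp (H m n) =
      (1 / (↑(t * v ^ 2 / Real.pi) : ℂ) ^ (1 / 2 : ℂ)) * ∑' n : ℤ, Complex.exp (Φ m n) := by
    intro m
    have hsplit : ∀ n : ℤ, Complex.exp (H m n) = Complex.exp (c2 m) *
        Complex.exp (-↑Real.pi * ↑(t * v ^ 2 / Real.pi) * (n : ℂ) ^ 2 +
          2 * ↑Real.pi * b2 m * (n : ℂ)) := by
      intro n
      rw [← Complex.exp_add]
      congr 1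
      have := ThetaAux.keyB t u v X Y C D htne hvne m n
      simp only [hH, hc1, hb1, hb2, hc2]
      rw [this]
      ring
    rw [tsum_congr hsplit, tsum_mul_left, Complex.tsum_exp_neg_quadratic ha2 (b2 m)]
    simp only [hdiv2]
    rw [← mul_assoc, mul_comm (Complex.exp (c2 m)), mul_assoc, ← tsum_mul_left]
    congr 1
    refine tsum_congr fun n => ?_
    rw [← Complex.exp_add]
  -- assemble the left-hand side
  have hLHS : Theta τ t x x₀ = (1 / (↑(t / Real.pi) : ℂ) ^ (1 / 2 : ℂ)) *
      ((1 / (↑(t * v ^ 2 / Real.pi) : ℂ) ^ (1 / 2 : ℂ)) *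
        ∑' m : ℤ, ∑' n : ℤ, Complex.exp (Φ m n)) := by
    rw [step1, tsum_congr step2, tsum_mul_left]
    congr 1
    rw [hsumH.tsum_comm, tsum_congr step3, tsum_mul_left]
  -- the right-hand side
  set Ψ : ℤ × ℤ → ℂ := fun p =>
    (↑(-(Real.pi ^ 2 / (v ^ 2 * t)) * ((C + (p.1 : ℝ) + (p.2 : ℝ) * u) ^ 2 +
        (D + (p.2 : ℝ) * v) ^ 2)) +
      ↑(Real.pi / v) *
        (((p.1 : ℂ) + (p.2 : ℂ) * ((u : ℂ) + (v : ℂ) * I)) * ((X : ℂ) - (Y : ℂ) * I) -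
          ((p.1 : ℂ) + (p.2 : ℂ) * ((u : ℂ) - (v : ℂ) * I)) * ((X : ℂ) + (Y : ℂ) * I))) +
      ↑(Real.pi / v) *
        (((C : ℂ) + (D : ℂ) * I) * ((X : ℂ) - (Y : ℂ) * I) -
          ((C : ℂ) - (D : ℂ) * I) * ((X : ℂ) + (Y : ℂ) * I)) with hΨ
  have htermR : ∀ p : ℤ × ℤ,
      (Real.exp (-(((alf τ) ^ 2)⁻¹ * t⁻¹) * ‖x₀ + lat τ p‖ ^ 2) : ℂ) *
        chi τ (lat τ p) x * chi τ x₀ x = Complex.exp (Ψ p) := by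
    intro p
    have habs : ‖x₀ + lat τ p‖ ^ 2 =
        (C + (p.1 : ℝ) + (p.2 : ℝ) * u) ^ 2 + (D + (p.2 : ℝ) * v) ^ 2 := by
      rw [← Complex.normSq_eq_norm_sq, Complex.normSq_apply]
      simp [lat]
      ring
    have hlat : lat τ p = (p.1 : ℂ) + (p.2 : ℂ) * ((u : ℂ) + (v : ℂ) * I) := by
      rw [lat, ← hτeq]
    have hlatconj : (starRingEnd ℂ) (lat τ p) =
        (p.1 : ℂ) + (p.2 : ℂ) * ((u : ℂ) - (v : ℂ) * I) := by
      rw [lat]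
      simp [map_add, map_mul, Complex.conj_ofReal, hconjτ]
    rw [chi, chi, hαinv, Complex.ofReal_exp, ← Complex.exp_add, ← Complex.exp_add]
    congr 1
    rw [hs, habs, hlatconj, hlat, hconjx, hconjx0, hx0eq, hxeq]
  have hsumR := ThetaAux.summable_theta_term τ hτ _ hspos x₀ x
  have hsumΨ : Summable fun p : ℤ × ℤ => Complex.exp (Ψ p) :=
    (hsumR.mul_right (chi τ x₀ x)).congr htermR
  set e : ℤ × ℤ ≃ ℤ × ℤ :=
    (Equiv.prodComm ℤ ℤ).trans ((Equiv.neg ℤ).prodCongr (Equiv.refl ℤ)) with he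
  have heval : ∀ q : ℤ × ℤ, e q = (-q.2, q.1) := fun q => rfl
  have hkeyC : ∀ q : ℤ × ℤ, Complex.exp (Ψ (e q)) = Complex.exp (Φ q.1 q.2) := by
    intro q
    congr 1
    rw [heval q, hΨ]
    simp only [hΦ, hc2, hb2]
    exact (ThetaAux.keyC t u v X Y C D htne hvne q.1 q.2).symm
  have hsumΦ : Summable fun q : ℤ × ℤ => Complex.exp (Φ q.1 q.2) :=
    ((e.summable_iff (f := fun p => Complex.exp (Ψ p))).mpr hsumΨ).congr hkeyC
  have hRHS : ((alf τ * t : ℝ) : ℂ)⁻¹ * Theta τ (((alf τ) ^ 2)⁻¹ * t⁻¹) x₀ x * chi τ x₀ x =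
      ((alf τ * t : ℝ) : ℂ)⁻¹ * ∑' m : ℤ, ∑' n : ℤ, Complex.exp (Φ m n) := by
    rw [Theta, mul_assoc, ← tsum_mul_right, tsum_congr htermR,
      ← e.tsum_eq (fun p : ℤ × ℤ => Complex.exp (Ψ p)), tsum_congr hkeyC]
    congr 1
    exact hsumΦ.tsum_prod
  -- the prefactor identity
  have hpre : (1 / (↑(t / Real.pi) : ℂ) ^ (1 / 2 : ℂ)) *
      (1 / (↑(t * v ^ 2 / Real.pi) : ℂ) ^ (1 / 2 : ℂ)) = ((alf τ * t : ℝ) : ℂ)⁻¹ := by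
    have h12 : (1 / 2 : ℂ) = ((1 / 2 : ℝ) : ℂ) := by norm_num
    rw [h12, ← Complex.ofReal_cpow (by positivity) (1 / 2 : ℝ),
      ← Complex.ofReal_cpow (by positivity) (1 / 2 : ℝ),
      ← Real.sqrt_eq_rpow, ← Real.sqrt_eq_rpow, half]
    rw [show (1 : ℂ) / ↑(Real.sqrt (t / Real.pi)) * (1 / ↑(Real.sqrt (t * v ^ 2 / Real.pi))) =
        ↑(1 / (Real.sqrt (t / Real.pi) * Real.sqrt (t * v ^ 2 / Real.pi))) by push_cast; ring]
    rw [← Complex.ofReal_inv]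
    congr 1
    rw [← Real.sqrt_mul (by positivity),
      show (t / Real.pi) * (t * v ^ 2 / Real.pi) = (v / Real.pi * t) ^ 2 by field_simp,
      Real.sqrt_sq (by positivity), one_div]
  rw [hLHS, hRHS, ← mul_assoc, hpre]
end
end

section
/- (Quasi-periodicity of R) Let Re s > 1, x, z ∈ ℂ and y ∈ ℝ∖{0}. Then R(s, x, z + 1, y) = exp(α⁻¹(x − conj x)) · R(s, x, z, y) and R(s, x, z + τ, y) = exp(α⁻¹(x·conj τ − conj(x)·τ)) · R(s, x, z, y). -/
noncomputable section

lemma chi_add (τ γ δ x : ℂ) : chi τ (γ + δ) x = chi τ γ x * chi τ δ x := by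
  unfold chi
  rw [← Complex.exp_add]
  congr 1
  rw [map_add]
  ring

lemma Rser_shift (τ s x z : ℂ) (y : ℝ) (a b : ℤ) :
    Rser τ s x (z + lat τ (a, b)) y = chi τ (-lat τ (a, b)) x * Rser τ s x z y := by
  unfold Rser
  rw [← tsum_mul_left, ← Equiv.tsum_eq (Equiv.addRight ((-a, -b) : ℤ × ℤ))]
  apply tsum_congr
  intro p
  have hl : lat τ (Equiv.addRight ((-a, -b) : ℤ × ℤ) p) = lat τ p - lat τ (a, b) := by
    simp only [Equiv.coe_addRight, lat, Prod.fst_add, Prod.snd_add]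
    push_cast
    ring
  rw [hl]
  have h1 : chi τ (lat τ p - lat τ (a, b)) x = chi τ (-lat τ (a, b)) x * chi τ (lat τ p) x := by
    rw [← chi_add]; ring_nf
  have h2 : z + lat τ (a, b) + (lat τ p - lat τ (a, b)) = z + lat τ p := by ring
  rw [h1, h2]
  ring

/-- Quasi-periodicity of R in the variable z:
R(s, x, z+1, y) = exp(α⁻¹(x − conj x)) R(s, x, z, y) and
R(s, x, z+τ, y) = exp(α⁻¹(x·conj τ − conj x·τ)) R(s, x, z, y). -/
theorem R_quasi_periodicity (τ : ℂ) (hτ : 0 < τ.im) (s : ℂ) (hs : 1 < s.re)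
    (x z : ℂ) (y : ℝ) (hy : y ≠ 0) :
    Rser τ s x (z + 1) y =
      Complex.exp (((alf τ)⁻¹ : ℝ) * (x - (starRingEnd ℂ) x)) * Rser τ s x z y ∧
    Rser τ s x (z + τ) y =
      Complex.exp (((alf τ)⁻¹ : ℝ) * (x * (starRingEnd ℂ) τ - (starRingEnd ℂ) x * τ)) *
        Rser τ s x z y := by
  constructor
  · have h1 : (1 : ℂ) = lat τ (1, 0) := by simp [lat]
    rw [h1, Rser_shift]
    congr 1
    unfold chi
    congr 1
    rw [← h1]
    simp only [map_neg, map_one]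
    ring
  · have h1 : z + τ = z + lat τ (0, 1) := by simp [lat]
    rw [h1, Rser_shift]
    congr 1
    unfold chi
    congr 1
    have h2 : lat τ (0, 1) = τ := by simp [lat]
    rw [h2]
    simp only [map_neg]
    ring
end
end
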